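/- For a finite simple graph G with Laplacian L, det(I - L) equals the number of rooted spanning forests of G with an even number of edges minus the number of rooted spanning forests with an odd number of edges. -/

import Mathlib

open Matrix SimpleGraph

/-- A rooted spanning forest of `G`. -/
structure RootedForest {V : Type*} (G : SimpleGraph V) where
  H : SimpleGraph V
  le : H ≤ G
  acyclic : H.IsAcyclic
  root : V → V
  reach_root : ∀ v, H.Reachable v (root v)
  root_const : ∀ u v, H.Reachable u v → root u = root v

namespace DFAux

attribute [local instance] Classical.propDecidable
set_option linter.unusedSectionVars false

def Valid {V : Type*} (G : SimpleGraph V) (g : V → V) : Prop := ∀ v, g v = v ∨ G.Adj v (g v)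

def Esc {V : Type*} (g : V → V) : Prop := ∀ v, ∃ k, g (g^[k] v) = g^[k] v

variable {V : Type*} [Fintype V] [DecidableEq V]

def nf (g : V → V) : ℕ := (Finset.univ.filter fun v => g v ≠ v).card

end DFAux

namespace DFAux

attribute [local instance] Classical.propDecidable
set_option linter.unusedSectionVars false

section PhiSide

variable {V : Type*} (g : V → V)

def Hg : SimpleGraph V where
  Adj a b := a ≠ b ∧ (g a = b ∨ g b = a)
  symm := ⟨by rintro a b ⟨h1, h2⟩; exact ⟨h1.symm, h2.symm⟩⟩
  loopless := ⟨by rintro a ⟨h1, _⟩; exact h1 rfl⟩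

lemma Hg_adj {a b : V} : (Hg g).Adj a b ↔ a ≠ b ∧ (g a = b ∨ g b = a) := Iff.rfl

lemma Hg_le {G : SimpleGraph V} (hval : Valid G g) : Hg g ≤ G := by
  rintro a b ⟨hne, h2⟩
  rcases h2 with h | h
  · rcases hval a with h1 | h1
    · exact absurd (h1.symm.trans h) hne
    · exact h ▸ h1
  · rcases hval b with h1 | h1
    · exact absurd (h1.symm.trans h) (Ne.symm hne)
    · exact (h ▸ h1).symm

variable {g} (hesc : Esc g)
include hesc

noncomputable def ht (v : V) : ℕ := Nat.find (hesc v)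

noncomputable def rt (v : V) : V := g^[ht hesc v] v

lemma rt_spec (v : V) : g (rt hesc v) = rt hesc v := Nat.find_spec (hesc v)

lemma ht_eq_zero {v : V} (h : g v = v) : ht hesc v = 0 := by
  rw [ht, Nat.find_eq_zero]
  simpa using h

lemma rt_fix {v : V} (h : g v = v) : rt hesc v = v := by
  rw [rt, ht_eq_zero hesc h]
  rfl

lemma ht_pos {v : V} (h : g v ≠ v) : 0 < ht hesc v := by
  rcases Nat.eq_zero_or_pos (ht hesc v) with h0 | h0
  · rw [ht, Nat.find_eq_zero] at h0
    simp only [Function.iterate_zero, id_eq] at h0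
    exact absurd h0 h
  · exact h0

lemma rt_stab (v : V) : ∀ k, ht hesc v ≤ k → g^[k] v = rt hesc v := by
  intro k hk
  induction k with
  | zero =>
    have : ht hesc v = 0 := Nat.le_zero.1 hk
    rw [rt, this]
  | succ k ihk =>
    rcases Nat.lt_or_ge (ht hesc v) (k+1) with h | h
    · have hk' : ht hesc v ≤ k := by omega
      rw [Function.iterate_succ_apply', ihk hk']
      exact rt_spec hesc v
    · have : ht hesc v = k + 1 := by omega
      rw [rt, this]

lemma ht_succ {v : V} (h : g v ≠ v) : ht hesc v = ht hesc (g v) + 1 := by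
  have hiter : ∀ k : ℕ, g^[k+1] v = g^[k] (g v) := fun k => Function.iterate_succ_apply g k v
  have h1 : ht hesc v ≤ ht hesc (g v) + 1 := by
    apply Nat.find_le
    rw [hiter]
    exact Nat.find_spec (hesc (g v))
  have hp : 0 < ht hesc v := ht_pos hesc h
  have h2 : ht hesc (g v) ≤ ht hesc v - 1 := by
    apply Nat.find_le
    rw [← hiter]
    have : ht hesc v - 1 + 1 = ht hesc v := by omega
    rw [this]
    exact Nat.find_spec (hesc v)
  omega

lemma ht_lt {v : V} (h : g v ≠ v) : ht hesc (g v) < ht hesc v := by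
  rw [ht_succ hesc h]; omega

lemma rt_g (v : V) : rt hesc (g v) = rt hesc v := by
  set m := ht hesc v + ht hesc (g v) with hm
  have h1 : g^[m+1] v = rt hesc v := rt_stab hesc v (m+1) (by omega)
  have h2 : g^[m] (g v) = rt hesc (g v) := rt_stab hesc (g v) m (by omega)
  rw [← h1, ← h2, Function.iterate_succ_apply]

end PhiSide

section Wlk

noncomputable def wlk {V : Type*} {g : V → V} (hesc : Esc g) :
    ∀ v : V, (Hg g).Walk v (rt hesc v) := fun v =>
  if h : g v = v then Walk.nil.copy rfl (rt_fix hesc h).symm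
  else (Walk.cons (show (Hg g).Adj v (g v) from ⟨fun hc => h hc.symm, Or.inl rfl⟩)
      (wlk hesc (g v))).copy rfl (rt_g hesc v)
termination_by v => ht hesc v
decreasing_by exact ht_lt hesc h

end Wlk

section PhiSide2

variable {V : Type*} {g : V → V} (hesc : Esc g)
include hesc

lemma wlk_support : ∀ (N : ℕ) (v : V), ht hesc v ≤ N →
    ∀ u ∈ (wlk hesc v).support, ht hesc u ≤ ht hesc v := by
  intro N
  induction N with
  | zero =>
    intro v hv u hu
    have hfix : g v = v := by
      by_contra hc
      have := ht_pos hesc hc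
      omega
    rw [wlk, dif_pos hfix] at hu
    rw [Walk.support_copy] at hu
    simp only [Walk.support_nil, List.mem_singleton] at hu
    subst hu; rfl
  | succ N ihN =>
    intro v hv u hu
    by_cases hfix : g v = v
    · rw [wlk, dif_pos hfix, Walk.support_copy] at hu
      simp only [Walk.support_nil, List.mem_singleton] at hu
      subst hu; rfl
    · rw [wlk, dif_neg hfix, Walk.support_copy, Walk.support_cons] at hu
      rcases List.mem_cons.1 hu with rfl | hu'
      · rfl
      · have hlt := ht_lt hesc hfix
        have := ihN (g v) (by omega) u hu'
        omega

lemma wlk_isPath : ∀ (N : ℕ) (v : V), ht hesc v ≤ N → (wlk hesc v).IsPath := by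
  intro N
  induction N with
  | zero =>
    intro v hv
    have hfix : g v = v := by
      by_contra hc
      have := ht_pos hesc hc
      omega
    rw [wlk, dif_pos hfix, Walk.isPath_copy]
    exact Walk.IsPath.nil
  | succ N ihN =>
    intro v hv
    by_cases hfix : g v = v
    · rw [wlk, dif_pos hfix, Walk.isPath_copy]
      exact Walk.IsPath.nil
    · rw [wlk, dif_neg hfix, Walk.isPath_copy, Walk.cons_isPath_iff]
      have hlt := ht_lt hesc hfix
      refine ⟨ihN (g v) (by omega) , fun hc => ?_⟩
      have := wlk_support hesc N (g v) (by omega) v hc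
      omega

lemma wlk_getVert {v : V} (h : g v ≠ v) : (wlk hesc v).getVert 1 = g v := by
  rw [wlk, dif_neg h, Walk.getVert_copy, Walk.getVert_cons_succ, Walk.getVert_zero]

lemma rt_reach (v : V) : (Hg g).Reachable v (rt hesc v) := ⟨wlk hesc v⟩

lemma rt_const {u v : V} (h : (Hg g).Reachable u v) : rt hesc u = rt hesc v := by
  obtain ⟨w⟩ := h
  induction w with
  | nil => rfl
  | cons hadj p ihp =>
    rename_i a b c
    obtain ⟨hne, hor⟩ := hadj
    rcases hor with h1 | h1
    · rw [← ihp, ← h1, rt_g]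
    · rw [← ihp, ← rt_g hesc b, h1]

lemma Hg_acyclic [DecidableEq V] : (Hg g).IsAcyclic := by
  intro v c hc
  -- choose vertex of maximal height on the cycle
  obtain ⟨u, humem, humax⟩ := Finset.exists_max_image c.support.toFinset (ht hesc)
    ⟨v, by simp [Walk.start_mem_support]⟩
  rw [List.mem_toFinset] at humem
  have hmax : ∀ w ∈ c.support, ht hesc w ≤ ht hesc u := by
    intro w hw
    exact humax w (List.mem_toFinset.2 hw)
  set d := c.rotate u humem with hd
  have hdc : d.IsCycle := hc.rotate humem
  have hd_sub : ∀ x ∈ d.support, x ∈ c.support := by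
    intro x hx
    rw [Walk.support_eq_cons] at hx
    rcases List.mem_cons.1 hx with rfl | hx'
    · exact humem
    · have hperm := Walk.support_rotate (c := c) (h := humem)
      have : x ∈ c.support.tail := hperm.mem_iff.1 (by rw [hd] at hx'; exact hx')
      exact List.mem_of_mem_tail this
  -- d = cons hadj q
  have hdnil : ¬d.Nil := hdc.not_nil
  obtain ⟨x, hadj, q, hdq⟩ := Walk.not_nil_iff.1 hdnil
  have hqlen : q.length ≥ 2 := by
    have h3 := hdc.three_le_length
    rw [hdq, Walk.length_cons] at h3
    omega
  have hqnil : ¬q.Nil := by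
    rw [Walk.nil_iff_length_eq]
    omega
  obtain ⟨y, hadj', q', hq'⟩ := Walk.not_nil_iff.1 (by
    rw [Walk.nil_iff_length_eq, Walk.length_reverse, ← Walk.nil_iff_length_eq] at *
    exact hqnil : ¬q.reverse.Nil)
  -- edges nodup gives x ≠ y
  have hxy : x ≠ y := by
    intro heq
    have hnodup : d.edges.Nodup := hdc.edges_nodup
    rw [hdq, Walk.edges_cons] at hnodup
    have h1 : s(u, y) ∈ q.edges := by
      have : s(u, y) ∈ q.reverse.edges := by
        rw [hq', Walk.edges_cons]
        exact List.mem_cons_self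
      rw [Walk.edges_reverse, List.mem_reverse] at this
      exact this
    rw [← heq] at h1
    exact (List.nodup_cons.1 hnodup).1 h1
  have hxs : x ∈ c.support := by
    apply hd_sub
    rw [hdq, Walk.support_cons]
    exact List.mem_cons_of_mem _ (Walk.start_mem_support q)
  have hys : y ∈ c.support := by
    apply hd_sub
    rw [hdq, Walk.support_cons]
    apply List.mem_cons_of_mem
    have : y ∈ q.reverse.support := by
      rw [hq', Walk.support_cons]
      exact List.mem_cons_of_mem _ (Walk.start_mem_support q')
    rw [Walk.support_reverse, List.mem_reverse] at this
    exact this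
  -- both edges force g u = x and g u = y
  have hgu : ∀ z, (Hg g).Adj u z → z ∈ c.support → g u = z := by
    intro z hz hzs
    rcases hz.2 with h1 | h1
    · exact h1
    · exfalso
      have : ht hesc z = ht hesc u + 1 := by
        have := ht_succ hesc (show g z ≠ z from fun hc' => hz.1 ((hc'.symm.trans h1).symm))
        rw [h1] at this
        exact this
      have := hmax z hzs
      omega
  have hgx : g u = x := hgu x hadj hxs
  have hgy : g u = y := hgu y hadj' hys
  exact hxy (hgx ▸ hgy)

noncomputable def Phi [DecidableEq V] (G : SimpleGraph V) (g : V → V) (hval : Valid G g) (hesc : Esc g) :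
    RootedForest G where
  H := Hg g
  le := Hg_le g hval
  acyclic := Hg_acyclic hesc
  root := rt hesc
  reach_root := rt_reach hesc
  root_const := fun u v h => rt_const hesc h

end PhiSide2

section PsiSide

attribute [local instance] Classical.propDecidable

variable {V : Type*} [DecidableEq V] {G : SimpleGraph V} (f : RootedForest G)

noncomputable def pth (v : V) : f.H.Path v (f.root v) := ((f.reach_root v).some).toPath

noncomputable def par (v : V) : V := (pth f v).1.getVert 1

lemma path_unique {a b : V} (p q : f.H.Path a b) : p = q :=
  (isAcyclic_iff_path_unique.mp f.acyclic) p q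

lemma par_eq_self_of_root {v : V} (h : v = f.root v) : par f v = v := by
  have hq : ((pth f v).1.copy rfl h.symm).IsPath := (Walk.isPath_copy _ _ _).2 (pth f v).2
  have hnil : (pth f v).1.copy rfl h.symm = Walk.nil := Walk.isPath_iff_eq_nil.1 hq
  have := congrArg (fun w => Walk.getVert w 1) hnil
  simpa [Walk.getVert_copy, par] using this

lemma par_adj {v : V} (h : v ≠ f.root v) : f.H.Adj v (par f v) := by
  have hlen : 0 < (pth f v).1.length := by
    rcases Nat.eq_zero_or_pos (pth f v).1.length with h0 | h0
    · exact absurd (Walk.eq_of_length_eq_zero h0) h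
    · exact h0
  have := (pth f v).1.adj_getVert_succ (i := 0) hlen
  rwa [Walk.getVert_zero] at this

lemma par_eq_self_iff {v : V} : par f v = v ↔ v = f.root v := by
  constructor
  · intro h
    by_contra hc
    exact (par_adj f hc).ne' h
  · exact par_eq_self_of_root f

lemma pth_par_length {v : V} (h : v ≠ f.root v) :
    (pth f (par f v)).1.length + 1 = (pth f v).1.length := by
  have hnil : ¬(pth f v).1.Nil := by
    rw [Walk.nil_iff_length_eq]
    exact fun h0 => h (Walk.eq_of_length_eq_zero h0)
  have hroot : f.root (par f v) = f.root v :=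
    f.root_const (par f v) v (par_adj f h).symm.reachable
  have hq2 : (((pth f v).1.tail).copy rfl hroot.symm).IsPath :=
    (Walk.isPath_copy _ _ _).2 ((pth f v).2.tail)
  have huniq : (⟨((pth f v).1.tail).copy rfl hroot.symm, hq2⟩ : f.H.Path (par f v) (f.root (par f v)))
      = pth f (par f v) := path_unique f _ _
  have hlen := congrArg (fun p : f.H.Path (par f v) (f.root (par f v)) => p.1.length) huniq
  simp only [Walk.length_copy] at hlen
  rw [← hlen]
  exact (congrArg (· + 1) (Walk.length_copy _ _ _)).trans (Walk.length_tail_add_one hnil)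

lemma par_valid : Valid G (par f) := by
  intro v
  by_cases h : v = f.root v
  · exact Or.inl (par_eq_self_of_root f h)
  · exact Or.inr (f.le (par_adj f h))

lemma par_esc : Esc (par f) := by
  suffices h : ∀ (N : ℕ) (v : V), (pth f v).1.length ≤ N →
      ∃ k, par f ((par f)^[k] v) = (par f)^[k] v by
    exact fun v => h (pth f v).1.length v le_rfl
  intro N
  induction N with
  | zero =>
    intro v hv
    exact ⟨0, by simpa using par_eq_self_of_root f (Walk.eq_of_length_eq_zero (Nat.le_zero.1 hv))⟩
  | succ N ihN =>
    intro v hv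
    by_cases h : v = f.root v
    · exact ⟨0, by simpa using par_eq_self_of_root f h⟩
    · have hlen := pth_par_length f h
      obtain ⟨k, hk⟩ := ihN (par f v) (by omega)
      refine ⟨k + 1, ?_⟩
      rw [Function.iterate_succ_apply]
      exact hk

lemma par_edge {a b : V} (hab : f.H.Adj a b) : par f a = b ∨ par f b = a := by
  have hr : f.root b = f.root a := f.root_const b a hab.symm.reachable
  by_cases haq : a ∈ (pth f b).1.support
  · right
    have hbp : b ∉ (pth f a).1.support := by
      intro hbp
      have hd2 : ((pth f a).1.dropUntil b hbp).IsPath := (pth f a).2.dropUntil hbp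
      have hq2 : ((pth f b).1.copy rfl hr).IsPath := (Walk.isPath_copy _ _ _).2 (pth f b).2
      have heq : (⟨(pth f a).1.dropUntil b hbp, hd2⟩ : f.H.Path b (f.root a))
          = ⟨(pth f b).1.copy rfl hr, hq2⟩ := path_unique f _ _
      have heq' : (pth f a).1.dropUntil b hbp = (pth f b).1.copy rfl hr :=
        congrArg Subtype.val heq
      have haq' : a ∈ ((pth f a).1.dropUntil b hbp).support := by
        rw [heq', Walk.support_copy]
        exact haq
      -- contradiction with nodup of support of (pth f a)
      have hspec := Walk.take_spec (pth f a).1 hbp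
      have hnodup : ((pth f a).1.support).Nodup := (pth f a).2.support_nodup
      rw [← hspec, Walk.support_append, List.nodup_append] at hnodup
      obtain ⟨-, -, hdisj⟩ := hnodup
      have h1 : a ∈ ((pth f a).1.takeUntil b hbp).support := Walk.start_mem_support _
      have h2 : a ∈ ((pth f a).1.dropUntil b hbp).support.tail := by
        have hcons := Walk.support_eq_cons ((pth f a).1.dropUntil b hbp)
        rw [hcons] at haq'
        rcases List.mem_cons.1 haq' with rfl | h'
        · exact absurd rfl hab.ne
        · exact h'
      exact hdisj a h1 a h2 rfl
    have hcons : (Walk.cons hab.symm (pth f a).1).IsPath :=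
      (Walk.cons_isPath_iff _ _).2 ⟨(pth f a).2, hbp⟩
    have hcopy : ((Walk.cons hab.symm (pth f a).1).copy rfl hr.symm).IsPath :=
      (Walk.isPath_copy _ _ _).2 hcons
    have heq : (⟨(Walk.cons hab.symm (pth f a).1).copy rfl hr.symm, hcopy⟩ :
        f.H.Path b (f.root b)) = pth f b := path_unique f _ _
    have heq' := congrArg (fun p : f.H.Path b (f.root b) => p.1.getVert 1) heq
    simp only [Walk.getVert_copy, Walk.getVert_cons_succ, Walk.getVert_zero] at heq'
    exact heq'.symm
  · left
    have hcons : (Walk.cons hab (pth f b).1).IsPath :=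
      (Walk.cons_isPath_iff _ _).2 ⟨(pth f b).2, haq⟩
    have hcopy : ((Walk.cons hab (pth f b).1).copy rfl hr).IsPath :=
      (Walk.isPath_copy _ _ _).2 hcons
    have heq : (⟨(Walk.cons hab (pth f b).1).copy rfl hr, hcopy⟩ :
        f.H.Path a (f.root a)) = pth f a := path_unique f _ _
    have heq' := congrArg (fun p : f.H.Path a (f.root a) => p.1.getVert 1) heq
    simp only [Walk.getVert_copy, Walk.getVert_cons_succ, Walk.getVert_zero] at heq'
    exact heq'.symm

lemma reach_par_iterate (v : V) : ∀ k, f.H.Reachable v ((par f)^[k] v) := by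
  intro k
  induction k with
  | zero => exact Reachable.refl v
  | succ k ihk =>
    rw [Function.iterate_succ_apply']
    refine ihk.trans ?_
    set u := (par f)^[k] v
    by_cases h : u = f.root u
    · rw [par_eq_self_of_root f h]
    · exact (par_adj f h).reachable

lemma Hg_par_eq : Hg (par f) = f.H := by
  ext a b
  rw [Hg_adj]
  constructor
  · rintro ⟨hne, h1 | h1⟩
    · have ha : a ≠ f.root a := by
        intro hc
        exact hne ((par_eq_self_of_root f hc) ▸ h1.symm ▸ rfl)
      exact h1 ▸ par_adj f ha
    · have hb : b ≠ f.root b := by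
        intro hc
        exact hne.symm ((par_eq_self_of_root f hc) ▸ h1.symm ▸ rfl)
      exact (h1 ▸ par_adj f hb).symm
  · intro hab
    rcases par_edge f hab with h | h
    · exact ⟨hab.ne, Or.inl h⟩
    · exact ⟨hab.ne, Or.inr h⟩

lemma rt_par_eq : rt (par_esc f) = f.root := by
  funext v
  set w := rt (par_esc f) v with hw
  have hfix : par f w = w := rt_spec (par_esc f) v
  have hwroot : w = f.root w := (par_eq_self_iff f).1 hfix
  have hreach : f.H.Reachable v w := by
    rw [hw, rt]
    exact reach_par_iterate f v _
  have := f.root_const v w hreach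
  rw [hwroot, ← this]

lemma rootedForest_ext {f₁ f₂ : RootedForest G} (h1 : f₁.H = f₂.H) (h2 : f₁.root = f₂.root) :
    f₁ = f₂ := by
  rcases f₁ with ⟨H1, le1, a1, r1, rr1, rc1⟩
  rcases f₂ with ⟨H2, le2, a2, r2, rr2, rc2⟩
  dsimp at h1 h2
  subst h1
  subst h2
  rfl

lemma par_Phi (g : V → V) (hval : Valid G g) (hesc : Esc g) :
    par (Phi G g hval hesc) = g := by
  funext v
  by_cases h : g v = v
  · rw [h, (par_eq_self_iff (Phi G g hval hesc)).2]
    exact (rt_fix hesc h).symm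
  · have hwp : (wlk hesc v).IsPath := wlk_isPath hesc (ht hesc v) v le_rfl
    have heq : (⟨wlk hesc v, hwp⟩ : (Hg g).Path v (rt hesc v)) = pth (Phi G g hval hesc) v :=
      path_unique (Phi G g hval hesc) _ _
    have heq' := congrArg (fun p : (Hg g).Path v (rt hesc v) => p.1.getVert 1) heq
    dsimp at heq'
    rw [wlk_getVert hesc h] at heq'
    exact heq'.symm

lemma Phi_par : Phi G (par f) (par_valid f) (par_esc f) = f :=
  rootedForest_ext (Hg_par_eq f) (rt_par_eq f)

end PsiSide

section DetSide

attribute [local instance] Classical.propDecidable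
set_option linter.unusedSectionVars false

variable {V : Type*} [Fintype V] [DecidableEq V]

/-- Standard basis row. -/
def ee (w : V) : V → ℤ := fun u => if w = u then 1 else 0

/-- The matrix with row `v` equal to `e_{g v} - e_v` for `v ∈ S` and `e_v` otherwise. -/
def Dm (g : V → V) (S : Finset V) : Matrix V V ℤ :=
  Matrix.of fun v u => if v ∈ S then (ee (g v) u - ee v u) else ee v u

lemma Dm_empty (g : V → V) : Dm g (∅ : Finset V) = 1 := by
  ext v u
  simp [Dm, ee, Matrix.one_apply]

lemma det_Dm (g : V → V) : ∀ S : Finset V, (∀ v ∈ S, g v ≠ v) →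
    (Dm g S).det = if (∀ v ∈ S, ∃ k, g^[k] v ∉ S) then (-1 : ℤ) ^ S.card else 0 := by
  intro S
  induction S using Finset.strongInduction with
  | _ S ih =>
  intro hg
  rcases S.eq_empty_or_nonempty with rfl | hSne
  · rw [Dm_empty, Matrix.det_one, if_pos (by simp)]
    simp
  by_cases hA : ∃ v ∈ S, g v ∉ S
  · obtain ⟨v, hvS, hgvS⟩ := hA
    have hvgv : v ≠ g v := fun h => hg v hvS h.symm
    set D := Dm g S with hD
    have h1 : (D.updateRow v (D v + (-1 : ℤ) • D (g v))).det = D.det :=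
      Matrix.det_updateRow_add_smul_self D hvgv (-1)
    have h2 : D v + (-1 : ℤ) • D (g v) = (-1 : ℤ) • ee v := by
      funext u
      simp only [Pi.add_apply, Pi.smul_apply, smul_eq_mul, hD, Dm, Matrix.of_apply,
        if_pos hvS, if_neg hgvS]
      ring
    have h4 : D.updateRow v (ee v) = Dm g (S.erase v) := by
      ext a u
      rcases eq_or_ne a v with rfl | hav
      · simp [Matrix.updateRow_self, Dm]
      · simp [Matrix.updateRow_ne hav, hD, Dm, Finset.mem_erase, hav]
    have h5 : D.det = -(Dm g (S.erase v)).det := by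
      rw [← h1, h2, Matrix.det_updateRow_smul, h4]; ring
    have hcard : S.card = (S.erase v).card + 1 := by
      have h6 := Finset.card_erase_of_mem hvS
      have h7 : 0 < S.card := Finset.card_pos.2 ⟨v, hvS⟩
      omega
    have hiff : (∀ u ∈ S, ∃ k, g^[k] u ∉ S) ↔ (∀ u ∈ S.erase v, ∃ k, g^[k] u ∉ S.erase v) := by
      constructor
      · intro h u hu
        obtain ⟨k, hk⟩ := h u (Finset.mem_of_mem_erase hu)
        exact ⟨k, fun hc => hk (Finset.mem_of_mem_erase hc)⟩
      · intro h u hu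
        rcases eq_or_ne u v with rfl | huv
        · exact ⟨1, by simpa using hgvS⟩
        · obtain ⟨k, hk⟩ := h u (Finset.mem_erase.2 ⟨huv, hu⟩)
          by_cases hkv : g^[k] u = v
          · refine ⟨k + 1, ?_⟩
            rw [Function.iterate_succ_apply', hkv]
            exact hgvS
          · exact ⟨k, fun hc => hk (Finset.mem_erase.2 ⟨hkv, hc⟩)⟩
    rw [h5, ih (S.erase v) (Finset.erase_ssubset hvS) (fun u hu => hg u (Finset.mem_of_mem_erase hu))]
    by_cases hc : ∀ u ∈ S, ∃ k, g^[k] u ∉ S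
    · rw [if_pos (hiff.1 hc), if_pos hc, hcard]
      ring
    · rw [if_neg (fun h => hc (hiff.2 h)), if_neg hc]
      ring
  · -- every v ∈ S has g v ∈ S : determinant vanishes
    push_neg at hA
    obtain ⟨v₀, hv₀⟩ := hSne
    have hit : ∀ k, g^[k] v₀ ∈ S := by
      intro k
      induction k with
      | zero => simpa using hv₀
      | succ k ihk => rw [Function.iterate_succ_apply']; exact hA _ ihk
    -- pigeonhole: find periodic point
    have hcard : (S.card) < (Finset.range (S.card + 1)).card := by simp
    obtain ⟨i, hi, j, hj, hij, hije⟩ :=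
      Finset.exists_ne_map_eq_of_card_lt_of_maps_to hcard (fun k _ => hit k)
    wlog hlt : i < j generalizing i j
    · exact this j hj i hi hij.symm hije.symm (by omega)
    set v := g^[i] v₀ with hv
    have hvS : v ∈ S := hit i
    set k := j - i with hk
    have hk0 : 0 < k := by omega
    have hper : g^[k] v = v := by
      rw [hv, ← Function.iterate_add_apply]
      have : k + i = j := by omega
      rw [this, ← hije]
    have hitv : ∀ m, g^[m] v ∈ S := by
      intro m
      rw [hv, ← Function.iterate_add_apply]
      exact hit _
    -- null left vector
    set c : V → ℤ := ∑ m ∈ Finset.range k, ee (g^[m] v) with hc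
    have hrow : ∀ m, (Dm g S) (g^[m] v) = fun u => ee (g^[m+1] v) u - ee (g^[m] v) u := by
      intro m
      funext u
      simp only [Dm, Matrix.of_apply, if_pos (hitv m)]
      rw [Function.iterate_succ_apply']
    have hvm : c ᵥ* (Dm g S) = 0 := by
      funext u
      simp only [Matrix.vecMul, dotProduct, hc, Finset.sum_apply, Pi.zero_apply]
      simp_rw [Finset.sum_mul]
      rw [Finset.sum_comm]
      have : ∀ m ∈ Finset.range k,
          (∑ x : V, ee (g^[m] v) x * (Dm g S) x u) = ee (g^[m+1] v) u - ee (g^[m] v) u := by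
        intro m _
        rw [show (∑ x : V, ee (g^[m] v) x * (Dm g S) x u)
            = (Dm g S) (g^[m] v) u by
          simp [ee, ite_mul]
        ]
        rw [hrow m]
      rw [Finset.sum_congr rfl this]
      rw [Finset.sum_range_sub (fun m => ee (g^[m] v) u) k]
      simp [hper]
    have hc0 : c ≠ 0 := by
      intro h0
      have : c v = 0 := by rw [h0]; rfl
      rw [hc] at this
      simp only [Finset.sum_apply] at this
      have hpos : 0 < ∑ m ∈ Finset.range k, ee (g^[m] v) v := by
        apply Finset.sum_pos'
        · intro m _
          simp only [ee]
          split <;> norm_num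
        · refine ⟨0, Finset.mem_range.2 hk0, ?_⟩
          simp [ee]
      omega
    have hdet : (Dm g S).det = 0 := Matrix.exists_vecMul_eq_zero_iff.1 ⟨c, hc0, hvm⟩
    rw [hdet, if_neg]
    intro h
    obtain ⟨m, hm⟩ := h v hvS
    exact hm (hitv m)

variable (G : SimpleGraph V) [DecidableRel G.Adj]

def tset (v : V) : Finset (Option V) := insert none ((G.neighborFinset v).image some)

def rowChoice (v : V) (c : Option V) : V → ℤ :=
  match c with
  | none => ee v
  | some w => fun u => ee w u - ee v u

lemma row_sum (v : V) : (1 - G.lapMatrix ℤ) v = ∑ c ∈ tset G v, rowChoice v c := by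
  have hni : (none : Option V) ∉ (G.neighborFinset v).image some := by simp
  funext u
  rw [tset]
  simp only [Finset.sum_apply]
  rw [Finset.sum_insert hni, Finset.sum_image (by simp)]
  simp only [rowChoice]
  rw [Finset.sum_sub_distrib]
  have h1 : ∑ w ∈ G.neighborFinset v, ee w u = if G.Adj v u then 1 else 0 := by
    rw [show (∑ w ∈ G.neighborFinset v, ee w u) = ∑ w ∈ G.neighborFinset v, if w = u then (1:ℤ) else 0 from rfl]
    rw [Finset.sum_ite_eq' (G.neighborFinset v) u (fun _ => (1:ℤ))]
    simp [SimpleGraph.mem_neighborFinset, adj_comm]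
  have h2 : ∑ _w ∈ G.neighborFinset v, ee v u = (G.degree v : ℤ) * ee v u := by
    rw [Finset.sum_const, SimpleGraph.card_neighborFinset_eq_degree]
    simp [mul_comm]
  rw [h1, h2]
  simp only [Matrix.sub_apply, Matrix.one_apply, SimpleGraph.lapMatrix, SimpleGraph.degMatrix,
    SimpleGraph.adjMatrix_apply, Matrix.sub_apply, Matrix.diagonal_apply, ee]
  by_cases hvu : v = u
  · subst hvu
    simp [G.irrefl]
    ring
  · simp [hvu, Ne.symm hvu]

def ghf (h : V → Option V) : V → V := fun v => (h v).getD v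

def Shf (h : V → Option V) : Finset V := Finset.univ.filter fun v => h v ≠ none

lemma hmem_props {h : V → Option V} (hh : h ∈ Fintype.piFinset (fun v => tset G v)) :
    (∀ v, h v = none → ghf h v = v) ∧ (∀ v w, h v = some w → ghf h v = w ∧ G.Adj v w) := by
  constructor
  · intro v hv; simp [ghf, hv]
  · intro v w hv
    have := Fintype.mem_piFinset.1 hh v
    rw [hv, tset] at this
    simp only [Finset.mem_insert, Finset.mem_image] at this
    rcases this with h1 | ⟨a, ha, h2⟩
    · exact absurd h1 (by simp)
    · obtain rfl : a = w := by injection h2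
      exact ⟨by simp [ghf, hv], (SimpleGraph.mem_neighborFinset _ _ _).1 ha⟩

lemma ghf_fixed_iff {h : V → Option V} (hh : h ∈ Fintype.piFinset (fun v => tset G v)) (v : V) :
    ghf h v = v ↔ h v = none := by
  obtain ⟨h1, h2⟩ := hmem_props G hh
  cases hv : h v with
  | none => simp [h1 v hv, hv]
  | some w =>
    obtain ⟨he, ha⟩ := h2 v w hv
    simp only [he, hv, reduceCtorEq, iff_false]
    exact fun hc => G.irrefl (hc ▸ ha)

theorem det_expand :
    (1 - G.lapMatrix ℤ).det =
    ∑ h ∈ Fintype.piFinset (fun v => tset G v),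
      (Matrix.of fun v => rowChoice v (h v)).det := by
  have h0 : (1 - G.lapMatrix ℤ) = Matrix.of (fun v => ∑ c ∈ tset G v, rowChoice v c) := by
    ext v u
    have := congrFun (row_sum G v) u
    simpa using this
  rw [h0]
  exact Matrix.detRowAlternating.toMultilinearMap.map_sum_finset rowChoice (fun v => tset G v)

theorem goalA :
    (1 - G.lapMatrix ℤ).det =
    ∑ g ∈ Finset.univ.filter (fun g : V → V => Valid G g ∧ Esc g), (-1 : ℤ) ^ nf g := by
  rw [det_expand]
  rw [show (∑ h ∈ Fintype.piFinset (fun v => tset G v),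
      (Matrix.of fun v => rowChoice v (h v)).det)
    = ∑ h ∈ Fintype.piFinset (fun v => tset G v),
      (if Esc (ghf h) then (-1 : ℤ) ^ nf (ghf h) else 0) from Finset.sum_congr rfl ?_]
  · -- reindex
    rw [show (∑ g ∈ Finset.univ.filter (fun g : V → V => Valid G g ∧ Esc g), (-1 : ℤ) ^ nf g)
      = ∑ g ∈ Finset.univ.filter (fun g : V → V => Valid G g),
          (if Esc g then (-1 : ℤ) ^ nf g else 0) from ?_]
    · refine Finset.sum_nbij' (i := ghf) (j := fun g v => if g v = v then none else some (g v))
        ?_ ?_ ?_ ?_ ?_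
      · intro h hh
        obtain ⟨h1, h2⟩ := hmem_props G hh
        simp only [Finset.mem_filter, Finset.mem_univ, true_and]
        intro v
        cases hv : h v with
        | none => exact Or.inl (h1 v hv)
        | some w => exact Or.inr ((h2 v w hv).1 ▸ (h2 v w hv).2)
      · intro g hg
        simp only [Finset.mem_filter, Finset.mem_univ, true_and] at hg
        rw [Fintype.mem_piFinset]
        intro v
        by_cases hv : g v = v
        · simp [hv, tset]
        · simp only [hv, if_neg, tset, Finset.mem_insert, Finset.mem_image]
          refine Or.inr ⟨g v, ?_, rfl⟩
          rw [SimpleGraph.mem_neighborFinset]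
          exact (hg v).resolve_left hv
      · intro h hh
        funext v
        by_cases hv : h v = none
        · simp [(ghf_fixed_iff G hh v).2 hv, hv]
        · have hne : ghf h v ≠ v := fun hc => hv ((ghf_fixed_iff G hh v).1 hc)
          simp only [hne, if_neg]
          cases hv2 : h v with
          | none => exact absurd hv2 hv
          | some w => simp [ghf, hv2]
      · intro g hg
        funext v
        by_cases hv : g v = v
        · simp [ghf, hv]
        · simp [ghf, hv]
      · intro h hh
        rfl
    · rw [Finset.sum_filter, Finset.sum_filter]
      refine Finset.sum_congr rfl fun g _ => ?_
      by_cases h1 : Valid G g <;> by_cases h2 : Esc g <;> simp [h1, h2]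
  · intro h hh
    obtain ⟨h1, h2⟩ := hmem_props G hh
    have hmat : (Matrix.of fun v => rowChoice v (h v)) = Dm (ghf h) (Shf h) := by
      ext v u
      cases hv : h v with
      | none =>
        simp [Dm, Shf, rowChoice, hv, h1 v hv]
      | some w =>
        obtain ⟨he, _⟩ := h2 v w hv
        simp [Dm, Shf, rowChoice, hv, he]
    rw [hmat, det_Dm (ghf h) (Shf h)]
    · have hSnf : (Shf h).card = nf (ghf h) := by
        congr 1
        ext v
        simp only [Shf, nf, Finset.mem_filter, Finset.mem_univ, true_and]
        exact not_congr (ghf_fixed_iff G hh v).symm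
      have hcond : (∀ v ∈ Shf h, ∃ k, (ghf h)^[k] v ∉ Shf h) ↔ Esc (ghf h) := by
        have hfix : ∀ u, u ∉ Shf h ↔ ghf h u = u := by
          intro u
          simp only [Shf, Finset.mem_filter, Finset.mem_univ, true_and, not_not]
          rw [← ghf_fixed_iff G hh u]
        constructor
        · intro hc v
          by_cases hv : v ∈ Shf h
          · obtain ⟨k, hk⟩ := hc v hv
            exact ⟨k, (hfix _).1 hk⟩
          · exact ⟨0, by simpa using (hfix _).1 hv⟩
        · intro he v _
          obtain ⟨k, hk⟩ := he v
          exact ⟨k, (hfix _).2 hk⟩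
      rw [hSnf]
      by_cases hc : Esc (ghf h)
      · rw [if_pos (hcond.2 hc), if_pos hc]
      · rw [if_neg (fun hx => hc (hcond.1 hx)), if_neg hc]
    · intro v hv
      simp only [Shf, Finset.mem_filter, Finset.mem_univ, true_and] at hv
      exact fun hc => hv ((ghf_fixed_iff G hh v).1 hc)


end DetSide

section Assembly

attribute [local instance] Classical.propDecidable
set_option linter.unusedSectionVars false

variable {V : Type*} [Fintype V] [DecidableEq V] (G : SimpleGraph V)

noncomputable def forestEquiv : RootedForest G ≃ {g : V → V // Valid G g ∧ Esc g} where
  toFun f := ⟨par f, par_valid f, par_esc f⟩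
  invFun x := Phi G x.1 x.2.1 x.2.2
  left_inv f := Phi_par f
  right_inv x := Subtype.ext (par_Phi x.1 x.2.1 x.2.2)

lemma card_edgeSet_eq_nf (g : V → V) (hesc : Esc g) :
    Nat.card (Hg g).edgeSet = nf g := by
  have hbij : Function.Bijective
      (fun v : {v : V // g v ≠ v} => (⟨s(v.1, g v.1),
        (Hg g).mem_edgeSet.2 ⟨fun hc => v.2 hc.symm, Or.inl rfl⟩⟩ : (Hg g).edgeSet)) := by
    constructor
    · rintro ⟨v1, hv1⟩ ⟨v2, hv2⟩ hv
      simp only [Subtype.mk.injEq, Sym2.eq_iff] at hv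
      rcases hv with ⟨h1, -⟩ | ⟨h1, h2⟩
      · exact Subtype.ext h1
      · exfalso
        have e1 : ht hesc v1 = ht hesc v2 + 1 := by
          have := ht_succ hesc hv1
          rw [h2] at this
          exact this
        have e2 : ht hesc v2 = ht hesc v1 + 1 := by
          have := ht_succ hesc hv2
          rw [← h1] at this
          exact this
        omega
    · rintro ⟨e, he⟩
      induction e using Sym2.ind with
      | _ a b =>
        obtain ⟨hne, h1 | h1⟩ := (Hg g).mem_edgeSet.1 he
        · refine ⟨⟨a, fun hc => hne (hc.symm.trans h1)⟩, Subtype.ext ?_⟩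
          show s(a, g a) = s(a, b)
          rw [h1]
        · refine ⟨⟨b, fun hc => hne.symm (hc.symm.trans h1)⟩, Subtype.ext ?_⟩
          show s(b, g b) = s(a, b)
          rw [h1]
          exact Sym2.eq_swap
  have h1 : Nat.card (Hg g).edgeSet = Nat.card {v : V // g v ≠ v} :=
    (Nat.card_congr (Equiv.ofBijective _ hbij)).symm
  rw [h1, Nat.card_eq_fintype_card, Fintype.card_subtype]
  rfl

lemma forest_card (P : ℕ → Prop) :
    Nat.card {f : RootedForest G // P (Nat.card f.H.edgeSet)}
      = (Finset.univ.filter (fun g : V → V => (Valid G g ∧ Esc g) ∧ P (nf g))).card := by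
  have e1 : {f : RootedForest G // P (Nat.card f.H.edgeSet)}
      ≃ {x : {g : V → V // Valid G g ∧ Esc g} // P (nf x.1)} := by
    refine Equiv.subtypeEquiv (forestEquiv G) fun f => ?_
    have hH : f.H = Hg (par f) := (Hg_par_eq f).symm
    rw [hH, card_edgeSet_eq_nf (par f) (par_esc f)]
    rfl
  have e2 : {x : {g : V → V // Valid G g ∧ Esc g} // P (nf x.1)}
      ≃ {g : V → V // (Valid G g ∧ Esc g) ∧ P (nf g)} :=
    Equiv.subtypeSubtypeEquivSubtypeInter (fun g : V → V => Valid G g ∧ Esc g)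
      (fun g => P (nf g))
  rw [Nat.card_congr (e1.trans e2), Nat.card_eq_fintype_card, Fintype.card_subtype]

end Assembly


section Main

attribute [local instance] Classical.propDecidable

variable {V : Type*} [Fintype V] [DecidableEq V]

lemma sum_split (s E O : Finset (V → V))
    (hE : ∀ g, g ∈ E ↔ g ∈ s ∧ Even (nf g)) (hO : ∀ g, g ∈ O ↔ g ∈ s ∧ Odd (nf g)) :
    ∑ g ∈ s, (-1 : ℤ) ^ nf g = (E.card : ℤ) - (O.card : ℤ) := by
  have hEeq : E = s.filter (fun g => Even (nf g)) := Finset.ext fun g => by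
    rw [hE g, Finset.mem_filter]
  have hOeq : O = s.filter (fun g => Odd (nf g)) := Finset.ext fun g => by
    rw [hO g, Finset.mem_filter]
  rw [hEeq, hOeq]
  rw [← Finset.sum_filter_add_sum_filter_not s (fun g => Even (nf g)) (fun g => (-1 : ℤ) ^ nf g)]
  have h1 : ∑ g ∈ s.filter (fun g => Even (nf g)), (-1 : ℤ) ^ nf g
      = ((s.filter (fun g => Even (nf g))).card : ℤ) := by
    rw [Finset.sum_congr rfl (fun g hg => Even.neg_one_pow (Finset.mem_filter.1 hg).2)]
    simp
  have h2 : ∑ g ∈ s.filter (fun g => ¬ Even (nf g)), (-1 : ℤ) ^ nf g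
      = -((s.filter (fun g => Odd (nf g))).card : ℤ) := by
    rw [show s.filter (fun g => ¬ Even (nf g)) = s.filter (fun g => Odd (nf g)) from
      Finset.filter_congr (fun g _ => by rw [Nat.not_even_iff_odd])]
    rw [Finset.sum_congr rfl (fun g hg => Odd.neg_one_pow (Finset.mem_filter.1 hg).2)]
    simp
  rw [h1, h2]
  ring

theorem main (G : SimpleGraph V) [DecidableRel G.Adj] :
    (1 - G.lapMatrix ℤ).det =
      (Nat.card {f : RootedForest G // Even (Nat.card f.H.edgeSet)} : ℤ) -
      (Nat.card {f : RootedForest G // Odd (Nat.card f.H.edgeSet)} : ℤ) := by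
  rw [goalA G, forest_card G Even, forest_card G Odd]
  refine sum_split _ _ _ (fun g => ?_) (fun g => ?_) <;>
    simp only [Finset.mem_filter, Finset.mem_univ, true_and]

end Main

end DFAux

theorem det_one_sub_lapMatrix_eq_even_sub_odd_forests
    {n : ℕ} (G : SimpleGraph (Fin n)) [DecidableRel G.Adj] :
    (1 - G.lapMatrix ℤ).det =
      (Nat.card {f : RootedForest G // Even (Nat.card f.H.edgeSet)} : ℤ) -
      (Nat.card {f : RootedForest G // Odd (Nat.card f.H.edgeSet)} : ℤ) :=
  DFAux.main G
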